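/- Generator intertwining identity underlying the factorial moment duality (key step for Theorem 2.2): Q_X * H = H * Q_Zᵀ, i.e. for all i ∈ {0,…,N} and all n ∈ {0,…,N} ∪ {Δ}, ∑_{j=0}^{N} Q_X(i,j)·H(j,n) = ∑_{m ∈ {0,…,N}∪{Δ}} Q_Z(n,m)·H(i,m). -/

import Mathlib

noncomputable section
open scoped BigOperators Matrix
open Finset

/-- duality function as a function of naturals -/
def hhf (N i c : ℕ) : ℝ := (Nat.descFactorial i c : ℝ) / (Nat.descFactorial N c : ℝ)

lemma descN_ne {N n : ℕ} (h : n ≤ N) : (Nat.descFactorial N n : ℝ) ≠ 0 := by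
  have : N.descFactorial n ≠ 0 := by
    simp [Nat.descFactorial_eq_zero_iff_lt]; omega
  exact_mod_cast Nat.cast_ne_zero.mpr this

lemma castE2 (i n : ℕ) : (Nat.descFactorial i (n+1) : ℝ) = ((i:ℝ) - n) * (Nat.descFactorial i n : ℝ) := by
  rcases le_or_gt n i with h | h
  · rw [Nat.descFactorial_succ, Nat.cast_mul, Nat.cast_sub h]
  · have h1 : Nat.descFactorial i (n+1) = 0 := by simp [Nat.descFactorial_eq_zero_iff_lt]; omega
    have h2 : Nat.descFactorial i n = 0 := by simp [Nat.descFactorial_eq_zero_iff_lt]; omega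
    rw [h1, h2]; simp

lemma castE1 (i n : ℕ) : (Nat.descFactorial (i+1) (n+1) : ℝ) = ((i:ℝ) + 1) * (Nat.descFactorial i n : ℝ) := by
  rw [Nat.succ_descFactorial_succ]; push_cast; ring

lemma hh_zero (N i : ℕ) : hhf N i 0 = 1 := by simp [hhf]

/-- D1 -/
lemma lemD1 (N i n : ℕ) : (i:ℝ) * (hhf N i n - hhf N (i-1) n) = n * hhf N i n := by
  rcases i with _ | ii
  · rcases n with _ | nn
    · simp [hh_zero]
    · simp [hhf, Nat.descFactorial_eq_zero_iff_lt]
  · rcases n with _ | nn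
    · simp [hh_zero]
    · show ((ii+1 : ℕ):ℝ) * (hhf N (ii+1) (nn+1) - hhf N ii (nn+1)) = _
      unfold hhf
      rw [castE1, castE2 ii nn, div_sub_div_same]
      simp only [mul_div_assoc']
      congr 1
      push_cast; ring

/-- D2 -/
lemma lemD2 {N n : ℕ} (i : ℕ) (hnN : n ≤ N) :
    ((N:ℝ) - i) * (hhf N (i+1) n - hhf N i n) = n * (hhf N i (n-1) - hhf N i n) := by
  rcases n with _ | nn
  · simp [hh_zero]
  · have h1 : (nn:ℝ) < N := by exact_mod_cast (by omega : nn < N)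
    have h2 : ((N:ℝ) - nn) ≠ 0 := by linarith
    have h3 := descN_ne (show nn ≤ N by omega)
    simp only [Nat.add_sub_cancel]
    unfold hhf
    rw [castE1, castE2 i nn, castE2 N nn]
    field_simp
    push_cast
    ring

/-- D3 -/
lemma lemD3 {N i n : ℕ} (hnN : n ≤ N) (hiN : i ≤ N) :
    ((N:ℝ) - n) * (hhf N i (n+1) - hhf N i n) = ((i:ℝ) - N) * hhf N i n := by
  rcases eq_or_lt_of_le hnN with h | h
  · have hz : ((N:ℝ) - n) = 0 := by rw [h]; ring
    rw [hz, zero_mul]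
    rcases eq_or_lt_of_le hiN with h2 | h2
    · have : ((i:ℝ) - N) = 0 := by rw [h2]; ring
      rw [this, zero_mul]
    · have : Nat.descFactorial i n = 0 := by simp [Nat.descFactorial_eq_zero_iff_lt]; omega
      unfold hhf; rw [this]; simp
  · have h1 : (n:ℝ) < N := by exact_mod_cast h
    have h2 : ((N:ℝ) - n) ≠ 0 := by linarith
    have h3 := descN_ne (show n ≤ N by omega)
    unfold hhf
    rw [castE2 i n, castE2 N n]
    field_simp
    ring

/-- D6 -/
lemma lemD6 {N i n : ℕ} (h1n : 1 ≤ n) (hnN : n ≤ N) (hiN : i ≤ N) :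
    ((n:ℝ) - 1 - i) * (hhf N i (n-1) - hhf N i n) = ((i:ℝ) - N) * hhf N i n := by
  rcases n with _ | nn
  · omega
  · have h1 : (nn:ℝ) < N := by exact_mod_cast (by omega : nn < N)
    have h2 : ((N:ℝ) - nn) ≠ 0 := by linarith
    have h3 := descN_ne (show nn ≤ N by omega)
    simp only [Nat.add_sub_cancel]
    unfold hhf
    rw [castE2 i nn, castE2 N nn]
    field_simp
    push_cast
    ring

/-- D5 -/
lemma lemD5 {N i n : ℕ} (hnN : n ≤ N) (hiN : i ≤ N) :
    (i:ℝ) * ((N:ℝ) - i) * (hhf N (i+1) n + hhf N (i-1) n - 2 * hhf N i n)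
      = (n:ℝ) * ((n:ℝ) - 1) * (hhf N i (n-1) - hhf N i n) := by
  rcases Nat.eq_zero_or_pos n with h | h
  · subst h; simp only [Nat.zero_sub, hh_zero, Nat.cast_zero]; ring
  · have hD1 := lemD1 N i n
    have hD2 := lemD2 i hnN
    have hD6 := lemD6 h hnN hiN
    linear_combination (i:ℝ) * hD2 - ((N:ℝ) - i) * hD1 - (n:ℝ) * hD6






/-- number of elements of `{n,…,N-1}` hit by the sample `f` -/
def Jf (N n k : ℕ) (f : Fin k → Fin N) : ℕ :=
  (Finset.univ.filter fun x : Fin N => n ≤ (x : ℕ) ∧ ∃ y, f y = x).card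

lemma card_top (N n : ℕ) : (Finset.univ.filter fun x : Fin N => n ≤ (x : ℕ)).card = N - n := by
  rw [show (Finset.univ.filter fun x : Fin N => n ≤ (x : ℕ)) =
      (Finset.Ico n N).attachFin (fun m hm => (Finset.mem_Ico.mp hm).2) from ?_]
  · rw [Finset.card_attachFin, Nat.card_Ico]
  · ext x
    simp [Finset.mem_attachFin, Finset.mem_Ico, x.isLt]

lemma hits_subset_top (N n k : ℕ) (f : Fin k → Fin N) :
    (Finset.univ.filter fun x : Fin N => n ≤ (x : ℕ) ∧ ∃ y, f y = x)
      ⊆ (Finset.univ.filter fun x : Fin N => n ≤ (x : ℕ)) := by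
  intro x hx
  simp only [Finset.mem_filter, Finset.mem_univ, true_and] at hx ⊢
  exact hx.1

lemma Jf_le (N n k : ℕ) (f : Fin k → Fin N) : Jf N n k f ≤ N - n := by
  rw [Jf, ← card_top N n]
  exact Finset.card_le_card (hits_subset_top N n k f)

lemma hits_cons (N n k : ℕ) (x : Fin N) (g : Fin k → Fin N) :
    (Finset.univ.filter fun z : Fin N => n ≤ (z : ℕ) ∧ ∃ y, (Fin.cons x g : Fin (k+1) → Fin N) y = z)
      = if n ≤ (x : ℕ) then
          insert x (Finset.univ.filter fun z : Fin N => n ≤ (z : ℕ) ∧ ∃ y, g y = z)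
        else (Finset.univ.filter fun z : Fin N => n ≤ (z : ℕ) ∧ ∃ y, g y = z) := by
  ext z
  by_cases h : n ≤ (x : ℕ)
  · rw [if_pos h]
    simp only [Finset.mem_filter, Finset.mem_univ, true_and, Finset.mem_insert,
      Fin.exists_fin_succ, Fin.cons_zero, Fin.cons_succ]
    constructor
    · rintro ⟨hz, (rfl | hy)⟩
      · exact Or.inl rfl
      · exact Or.inr ⟨hz, hy⟩
    · rintro (rfl | ⟨hz, hy⟩)
      · exact ⟨h, Or.inl rfl⟩
      · exact ⟨hz, Or.inr hy⟩
  · rw [if_neg h]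
    simp only [Finset.mem_filter, Finset.mem_univ, true_and,
      Fin.exists_fin_succ, Fin.cons_zero, Fin.cons_succ]
    constructor
    · rintro ⟨hz, (rfl | hy)⟩
      · exact absurd hz h
      · exact ⟨hz, hy⟩
    · rintro ⟨hz, hy⟩
      exact ⟨hz, Or.inr hy⟩

lemma Jf_cons (N n k : ℕ) (x : Fin N) (g : Fin k → Fin N) :
    Jf N n (k+1) (Fin.cons x g)
      = if n ≤ (x : ℕ) ∧ x ∉ (Finset.univ.filter fun z : Fin N => n ≤ (z : ℕ) ∧ ∃ y, g y = z)
        then Jf N n k g + 1 else Jf N n k g := by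
  rw [Jf, hits_cons]
  by_cases hx : n ≤ (x : ℕ)
  · by_cases hmem : x ∈ (Finset.univ.filter fun z : Fin N => n ≤ (z : ℕ) ∧ ∃ y, g y = z)
    · rw [if_pos hx, Finset.insert_eq_self.mpr hmem, if_neg (by tauto)]; rfl
    · rw [if_pos hx, Finset.card_insert_of_notMem hmem, if_pos ⟨hx, hmem⟩]; rfl
  · rw [if_neg hx, if_neg (by tauto)]; rfl


lemma arithQ {N i q : ℕ} (hq : q ≤ N) (hi : i ≤ N) :
    ((N:ℝ) - q) * hhf N i (q+1) + (q:ℝ) * hhf N i q = (i:ℝ) * hhf N i q := by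
  linear_combination lemD3 hq hi

lemma C3f (N i n : ℕ) (hnN : n ≤ N) (hiN : i ≤ N) :
    ∀ k : ℕ, ∑ f : Fin k → Fin N, hhf N i (n + Jf N n k f) = (i:ℝ)^k * hhf N i n := by
  intro k
  induction k with
  | zero =>
      have hJ : ∀ f : Fin 0 → Fin N, Jf N n 0 f = 0 := by
        intro f
        rw [Jf, Finset.card_eq_zero, Finset.filter_eq_empty_iff]
        intro x _
        rintro ⟨-, ⟨y, -⟩⟩
        exact y.elim0
      simp [hJ]
  | succ k ih =>
      have key : ∀ g : Fin k → Fin N,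
          ∑ x : Fin N, hhf N i (n + Jf N n (k+1) (Fin.cons x g))
            = (i:ℝ) * hhf N i (n + Jf N n k g) := by
        intro g
        have hle : Jf N n k g ≤ N - n := Jf_le N n k g
        set J := Jf N n k g with hJ
        set A := (Finset.univ.filter fun z : Fin N => n ≤ (z : ℕ) ∧ ∃ y, g y = z) with hA
        have hJA : J = A.card := rfl
        have hq : n + J ≤ N := by omega
        have step1 : ∑ x : Fin N, hhf N i (n + Jf N n (k+1) (Fin.cons x g))
            = ∑ x : Fin N, (if n ≤ (x : ℕ) ∧ x ∉ A then hhf N i (n + J + 1) else hhf N i (n + J)) := by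
          apply Finset.sum_congr rfl
          intro x _
          rw [Jf_cons]
          split_ifs <;> rfl
        rw [step1, Finset.sum_ite, Finset.sum_const, Finset.sum_const, nsmul_eq_mul, nsmul_eq_mul]
        have hsub : A ⊆ (Finset.univ.filter fun x : Fin N => n ≤ (x : ℕ)) := hits_subset_top N n k g
        have hfilter : (Finset.univ.filter fun x : Fin N => n ≤ (x : ℕ) ∧ x ∉ A)
            = (Finset.univ.filter fun x : Fin N => n ≤ (x : ℕ)) \ A := by
          ext x
          simp only [Finset.mem_filter, Finset.mem_univ, true_and, Finset.mem_sdiff]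
        have hc1 : (Finset.univ.filter fun x : Fin N => n ≤ (x : ℕ) ∧ x ∉ A).card = N - (n + J) := by
          rw [hfilter, Finset.card_sdiff_of_subset hsub, card_top, ← hJA]
          omega
        have hc2 : (Finset.univ.filter fun x : Fin N => ¬(n ≤ (x : ℕ) ∧ x ∉ A)).card = n + J := by
          have := Finset.card_filter_add_card_filter_not
            (s := (Finset.univ : Finset (Fin N))) (fun x : Fin N => n ≤ (x : ℕ) ∧ x ∉ A)
          rw [Finset.card_univ, Fintype.card_fin, hc1] at this
          omega
        rw [hc1, hc2]
        have hcast : ((N - (n + J) : ℕ) : ℝ) = (N : ℝ) - (n + J : ℕ) := by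
          push_cast [Nat.cast_sub hq]; ring
        rw [hcast]
        have := arithQ (N := N) (i := i) (q := n + J) hq hiN
        push_cast at this ⊢
        linarith [this]
      calc ∑ f : Fin (k+1) → Fin N, hhf N i (n + Jf N n (k+1) f)
          = ∑ p : Fin N × (Fin k → Fin N), hhf N i (n + Jf N n (k+1) ((Fin.consEquiv (fun _ => Fin N)) p)) :=
            (Equiv.sum_comp (Fin.consEquiv (fun _ => Fin N)) _).symm
        _ = ∑ x : Fin N, ∑ g : Fin k → Fin N, hhf N i (n + Jf N n (k+1) (Fin.cons x g)) := by
            rw [Fintype.sum_prod_type]; rfl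
        _ = ∑ g : Fin k → Fin N, ∑ x : Fin N, hhf N i (n + Jf N n (k+1) (Fin.cons x g)) :=
            Finset.sum_comm
        _ = ∑ g : Fin k → Fin N, (i:ℝ) * hhf N i (n + Jf N n k g) := by
            exact Finset.sum_congr rfl fun g _ => key g
        _ = (i:ℝ) * ((i:ℝ)^k * hhf N i n) := by rw [← Finset.mul_sum, ih]
        _ = (i:ℝ)^(k+1) * hhf N i n := by ring
def pp (N n m j : ℕ) : ℝ :=
  ((Finset.univ.filter fun f : Fin m → Fin N =>
      (Finset.univ.filter fun x : Fin N => n ≤ (x : ℕ) ∧ ∃ y, f y = x).card = j).card : ℝ)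
    / (N : ℝ) ^ m

lemma pp_eq (N n k j : ℕ) :
    pp N n k j = ((Finset.univ.filter fun f : Fin k → Fin N => Jf N n k f = j).card : ℝ) / (N:ℝ)^k := rfl

lemma pp_nonneg (N n k j : ℕ) : 0 ≤ pp N n k j := by
  rw [pp_eq]
  positivity

lemma pp_le_one {N : ℕ} (hN : 1 ≤ N) (n k j : ℕ) : pp N n k j ≤ 1 := by
  rw [pp_eq, div_le_one (by positivity)]
  have h1 : (Finset.univ.filter fun f : Fin k → Fin N => Jf N n k f = j).card
      ≤ Fintype.card (Fin k → Fin N) := by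
    rw [← Finset.card_univ]
    exact Finset.card_filter_le _ _
  have h2 : Fintype.card (Fin k → Fin N) = N ^ k := by simp [Fintype.card_fun]
  calc ((Finset.univ.filter fun f : Fin k → Fin N => Jf N n k f = j).card : ℝ)
      ≤ ((N ^ k : ℕ) : ℝ) := by exact_mod_cast h2 ▸ h1
    _ = (N:ℝ)^k := by push_cast; ring

lemma pp_eq_zero {N n j : ℕ} (k : ℕ) (h : N - n < j) : pp N n k j = 0 := by
  rw [pp_eq]
  have : (Finset.univ.filter fun f : Fin k → Fin N => Jf N n k f = j) = ∅ := by
    rw [Finset.filter_eq_empty_iff]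
    intro f _ hf
    have := Jf_le N n k f
    omega
  rw [this]
  simp

lemma fiber_sum (N n k : ℕ) (F : ℕ → ℝ) :
    ∑ j ∈ Finset.range (N - n + 1),
        ((Finset.univ.filter fun f : Fin k → Fin N => Jf N n k f = j).card : ℝ) * F j
      = ∑ f : Fin k → Fin N, F (Jf N n k f) := by
  rw [← Finset.sum_fiberwise_of_maps_to (s := (Finset.univ : Finset (Fin k → Fin N)))
    (g := Jf N n k) (t := Finset.range (N - n + 1))
    (fun f _ => Finset.mem_range.mpr (by have := Jf_le N n k f; omega))
    (fun f => F (Jf N n k f))]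
  apply Finset.sum_congr rfl
  intro j _
  rw [show ∑ f ∈ Finset.univ.filter (fun f : Fin k → Fin N => Jf N n k f = j), F (Jf N n k f)
      = ∑ f ∈ Finset.univ.filter (fun f : Fin k → Fin N => Jf N n k f = j), F j from
    Finset.sum_congr rfl (fun f hf => by rw [(Finset.mem_filter.mp hf).2])]
  rw [Finset.sum_const, nsmul_eq_mul]

lemma lemC1 {N : ℕ} (hN : 1 ≤ N) (n k : ℕ) :
    ∑ j ∈ Finset.range (N - n + 1), pp N n k j = 1 := by
  have h1 : ∑ j ∈ Finset.range (N - n + 1), pp N n k j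
      = (∑ j ∈ Finset.range (N - n + 1),
          ((Finset.univ.filter fun f : Fin k → Fin N => Jf N n k f = j).card : ℝ) * 1) / (N:ℝ)^k := by
    rw [Finset.sum_div]
    exact Finset.sum_congr rfl fun j _ => by rw [pp_eq]; ring
  rw [h1, fiber_sum N n k (fun _ => (1:ℝ))]
  rw [Finset.sum_const, nsmul_eq_mul, Finset.card_univ]
  have h2 : Fintype.card (Fin k → Fin N) = N ^ k := by simp [Fintype.card_fun]
  rw [h2]
  rw [mul_one]
  rw [div_eq_one_iff_eq (by positivity)]
  push_cast; ring

lemma lemC3 {N i n : ℕ} (hN : 1 ≤ N) (hnN : n ≤ N) (hiN : i ≤ N) (k : ℕ) :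
    ∑ j ∈ Finset.range (N - n + 1), pp N n k j * hhf N i (n + j)
      = hhf N i n * ((i:ℝ)/N)^k := by
  have h1 : ∑ j ∈ Finset.range (N - n + 1), pp N n k j * hhf N i (n + j)
      = (∑ j ∈ Finset.range (N - n + 1),
          ((Finset.univ.filter fun f : Fin k → Fin N => Jf N n k f = j).card : ℝ)
            * hhf N i (n + j)) / (N:ℝ)^k := by
    rw [Finset.sum_div]
    exact Finset.sum_congr rfl fun j _ => by rw [pp_eq]; ring
  rw [h1, fiber_sum N n k (fun j => hhf N i (n + j)), C3f N i n hnN hiN k, div_pow]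
  have : (N:ℝ)^k ≠ 0 := by positivity
  field_simp

lemma lemM0 {N : ℕ} (u ν₀ : ℝ) (i n : ℕ) :
    (i:ℝ) * u * ν₀ * (hhf N (i-1) n - hhf N i n) = -(u * ν₀ * n * hhf N i n) := by
  linear_combination (-(u * ν₀)) * lemD1 N i n

lemma lemM1 {N n : ℕ} (u ν₁ : ℝ) (i : ℕ) (hnN : n ≤ N) :
    ((N:ℝ) - i) * u * ν₁ * (hhf N (i+1) n - hhf N i n)
      = u * ν₁ * (n:ℝ) * (hhf N i (n-1) - hhf N i n) := by
  linear_combination (u * ν₁) * lemD2 i hnN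

lemma lemR {N i n : ℕ} (r : ℝ) (hnN : n ≤ N) (hiN : i ≤ N) :
    r/2 * ((N:ℝ) - i) * ((i:ℝ)/N) * (hhf N (i+1) n - hhf N i n)
      + r/2 * (i:ℝ) * (((N:ℝ) - i)/N) * (hhf N (i-1) n - hhf N i n)
    = 1/N * (n.choose 2 : ℝ) * r * (hhf N i (n-1) - hhf N i n) := by
  rw [Nat.cast_choose_two]
  linear_combination (r/(2*N)) * lemD5 hnN hiN + (r/(2*N)) * lemD1 N i n
    - (r/(2*N)) * lemD1 N i n

lemma lemK {N i n : ℕ} (κ : ℝ) (hnN : n ≤ N) (hiN : i ≤ N) :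
    κ/2 * ((N:ℝ) - i) * ((i:ℝ)/N) * (((N:ℝ) - i)/N) * (hhf N (i+1) n - hhf N i n)
      + κ/2 * (i:ℝ) * (((N:ℝ) - i)/N)^2 * (hhf N (i-1) n - hhf N i n)
    = κ/N * (n.choose 2 : ℝ) * (((N:ℝ) - n)/N) * (hhf N i (n+1) - hhf N i n)
      + 1/N * (n.choose 2 : ℝ) * (κ * (((N:ℝ) - n + 1)/N)) * (hhf N i (n-1) - hhf N i n) := by
  rcases Nat.eq_zero_or_pos n with h | h
  · subst h
    norm_num [hh_zero]
  · rw [Nat.cast_choose_two]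
    linear_combination (κ*((N:ℝ) - i)/(2*N^2)) * lemD5 hnN hiN
      - (κ*(n:ℝ)*((n:ℝ)-1)/(2*N^2)) * lemD3 hnN hiN
      + (κ*(n:ℝ)*((n:ℝ)-1)/(2*N^2)) * lemD6 h hnN hiN

lemma summable_s {s : ℕ → ℝ} (hs0 : s 0 = 0) (hs : ∀ m, 0 ≤ s m)
    (hssum : Summable fun m : ℕ => (m : ℝ) * s m) : Summable s := by
  apply Summable.of_nonneg_of_le hs _ hssum
  intro k
  rcases k with _ | k
  · rw [hs0]; norm_num
  · apply le_mul_of_one_le_left (hs _)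
    exact_mod_cast Nat.one_le_iff_ne_zero.mpr (Nat.succ_ne_zero k)

lemma summable_spp {N : ℕ} (hN : 1 ≤ N) {s : ℕ → ℝ} (hs : ∀ m, 0 ≤ s m)
    (hsum : Summable s) (n j : ℕ) : Summable (fun k => s k * pp N n k j) := by
  apply Summable.of_nonneg_of_le (fun k => mul_nonneg (hs k) (pp_nonneg N n k j)) _ hsum
  intro k
  calc s k * pp N n k j ≤ s k * 1 := by
        apply mul_le_mul_of_nonneg_left (pp_le_one hN n k j) (hs k)
    _ = s k := mul_one _

/-- reindexing a guarded sum over `Fin (N+1)` as a sum over a range -/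
lemma sumFinIf (N n : ℕ) (hnN : n ≤ N) (F : ℕ → ℝ) :
    ∑ m : Fin (N+1), (if n ≤ (m:ℕ) then F (m:ℕ) else 0)
      = ∑ j ∈ Finset.range (N - n + 1), F (n + j) := by
  rw [← Finset.sum_filter]
  apply Finset.sum_nbij' (i := fun (m : Fin (N+1)) => (m:ℕ) - n)
    (j := fun j => (⟨min (n + j) N, by omega⟩ : Fin (N+1)))
  · intro a ha
    have h1 := a.isLt
    have h2 := (Finset.mem_filter.mp ha).2
    rw [Finset.mem_range]
    omega
  · intro a ha
    rw [Finset.mem_filter]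
    refine ⟨Finset.mem_univ _, ?_⟩
    simp only
    omega
  · intro a ha
    have h2 := (Finset.mem_filter.mp ha).2
    have h1 := a.isLt
    apply Fin.ext
    simp only
    omega
  · intro a ha
    have := Finset.mem_range.mp ha
    simp only
    omega
  · intro a ha
    have h2 := (Finset.mem_filter.mp ha).2
    congr 1
    omega

lemma sumFinSingle {N : ℕ} (c : ℕ) (v : ℕ → ℝ) :
    ∑ j : Fin (N+1), (if (j:ℕ) = c then v (j:ℕ) else 0) = if c ≤ N then v c else 0 := by
  rcases le_or_gt c N with h | h
  · rw [if_pos h, Finset.sum_eq_single (⟨c, by omega⟩ : Fin (N+1))]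
    · simp
    · intro b _ hb
      rw [if_neg]
      intro hc
      exact hb (Fin.ext (by simpa using hc))
    · intro h'
      exact absurd (Finset.mem_univ _) h'
  · rw [if_neg (by omega)]
    apply Finset.sum_eq_zero
    intro j _
    rw [if_neg]
    have := j.isLt
    omega

lemma lemS {N i n : ℕ} (hN : 1 ≤ N) (hnN : n ≤ N) (hiN : i ≤ N)
    {s : ℕ → ℝ} (hs0 : s 0 = 0) (hs : ∀ m, 0 ≤ s m)
    (hssum : Summable fun m : ℕ => (m : ℝ) * s m) :
    (∑' m : ℕ, s m * (i:ℝ) * (1 - ((i:ℝ)/(N:ℝ))^m)) * (hhf N (i-1) n - hhf N i n)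
      = ((n:ℝ) * ∑' k : ℕ, s k * pp N n k 1) * (hhf N i (n+1) - hhf N i n)
        + ∑ m : Fin (N+1), (if n + 2 ≤ (m:ℕ) then
            ((n:ℝ) * ∑' k : ℕ, s k * pp N n k ((m:ℕ) - n)) * (hhf N i (m:ℕ) - hhf N i n) else 0) := by
  have hsum := summable_s hs0 hs hssum
  have hsp : ∀ j, Summable (fun k => s k * pp N n k j) := fun j => summable_spp hN hs hsum n j
  -- Step A : merge the two right-hand pieces into one guarded sum
  have stepA : ((n:ℝ) * ∑' k : ℕ, s k * pp N n k 1) * (hhf N i (n+1) - hhf N i n)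
        + ∑ m : Fin (N+1), (if n + 2 ≤ (m:ℕ) then
            ((n:ℝ) * ∑' k : ℕ, s k * pp N n k ((m:ℕ) - n)) * (hhf N i (m:ℕ) - hhf N i n) else 0)
      = ∑ m : Fin (N+1), (if n + 1 ≤ (m:ℕ) then
            ((n:ℝ) * ∑' k : ℕ, s k * pp N n k ((m:ℕ) - n)) * (hhf N i (m:ℕ) - hhf N i n) else 0) := by
    have hsplit : ∀ m : Fin (N+1),
        (if n + 1 ≤ (m:ℕ) then
            ((n:ℝ) * ∑' k : ℕ, s k * pp N n k ((m:ℕ) - n)) * (hhf N i (m:ℕ) - hhf N i n) else 0)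
        = (if (m:ℕ) = n + 1 then
            ((n:ℝ) * ∑' k : ℕ, s k * pp N n k ((m:ℕ) - n)) * (hhf N i (m:ℕ) - hhf N i n) else 0)
          + (if n + 2 ≤ (m:ℕ) then
            ((n:ℝ) * ∑' k : ℕ, s k * pp N n k ((m:ℕ) - n)) * (hhf N i (m:ℕ) - hhf N i n) else 0) := by
      intro m
      split_ifs with h1 h2 h3 h2 h3 <;> (first | ring1 | (exfalso; omega))
    rw [Finset.sum_congr rfl (fun m _ => hsplit m), Finset.sum_add_distrib]
    have hsingle := sumFinSingle (N := N) (n+1)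
      (fun c => ((n:ℝ) * ∑' k : ℕ, s k * pp N n k (c - n)) * (hhf N i c - hhf N i n))
    rw [hsingle]
    rcases le_or_gt (n+1) N with h | h
    · rw [if_pos h]
      simp only [show n + 1 - n = 1 from by omega]
    · rw [if_neg (by omega)]
      have hz : ∀ k : ℕ, s k * pp N n k 1 = 0 := fun k => by
        rw [pp_eq_zero k (by omega), mul_zero]
      rw [show (∑' k : ℕ, s k * pp N n k 1) = 0 from by simp [hz], mul_zero, zero_mul]
  rw [stepA]
  -- Step B : pull the tsum out of each summand
  have stepB : ∀ m : Fin (N+1),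
      (if n + 1 ≤ (m:ℕ) then
          ((n:ℝ) * ∑' k : ℕ, s k * pp N n k ((m:ℕ) - n)) * (hhf N i (m:ℕ) - hhf N i n) else 0)
      = ∑' k : ℕ, (if n + 1 ≤ (m:ℕ) then
          ((n:ℝ) * (s k * pp N n k ((m:ℕ) - n))) * (hhf N i (m:ℕ) - hhf N i n) else 0) := by
    intro m
    split_ifs with h
    · rw [tsum_mul_right, tsum_mul_left]
    · simp
  rw [Finset.sum_congr rfl (fun m _ => stepB m)]
  -- Step C : interchange the finite sum and the tsum
  rw [← Summable.tsum_finsetSum (fun m _ => ?_)]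
  swap
  · by_cases h : n + 1 ≤ (m:ℕ)
    · simp only [if_pos h]
      exact ((hsp ((m:ℕ) - n)).mul_left (n:ℝ)).mul_right _
    · simp only [if_neg h]
      exact summable_zero
  -- Step L : rewrite the left-hand side as a tsum
  rw [← tsum_mul_right]
  apply tsum_congr
  intro k
  -- Step D : evaluate the inner finite sum for a fixed k
  have hguard : ∀ m : Fin (N+1),
      (if n + 1 ≤ (m:ℕ) then
          ((n:ℝ) * (s k * pp N n k ((m:ℕ) - n))) * (hhf N i (m:ℕ) - hhf N i n) else 0)
      = (if n ≤ (m:ℕ) then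
          ((n:ℝ) * (s k * pp N n k ((m:ℕ) - n))) * (hhf N i (m:ℕ) - hhf N i n) else 0) := by
    intro m
    rcases Nat.lt_or_ge (m:ℕ) n with h | h
    · rw [if_neg (by omega), if_neg (by omega)]
    · rcases Nat.eq_or_lt_of_le h with h2 | h2
      · rw [if_neg (by omega), if_pos (by omega), ← h2, sub_self, mul_zero]
      · rw [if_pos (by omega), if_pos (by omega)]
  rw [Finset.sum_congr rfl (fun m _ => hguard m),
    sumFinIf N n hnN (fun c => ((n:ℝ) * (s k * pp N n k (c - n))) * (hhf N i c - hhf N i n))]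
  simp only [Nat.add_sub_cancel_left]
  have expand : ∀ j : ℕ,
      ((n:ℝ) * (s k * pp N n k j)) * (hhf N i (n + j) - hhf N i n)
      = (n:ℝ) * s k * (pp N n k j * hhf N i (n + j)) - (n:ℝ) * s k * (pp N n k j * hhf N i n) := by
    intro j; ring
  rw [Finset.sum_congr rfl (fun j _ => expand j), Finset.sum_sub_distrib,
    ← Finset.mul_sum, ← Finset.mul_sum]
  have hC3 := lemC3 hN hnN hiN k
  have hC1 := lemC1 hN n k
  rw [hC3]
  rw [show ∑ j ∈ Finset.range (N - n + 1), pp N n k j * hhf N i n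
      = (∑ j ∈ Finset.range (N - n + 1), pp N n k j) * hhf N i n from by
    rw [Finset.sum_mul], hC1]
  have hD1 := lemD1 N i n
  linear_combination (-(s k) * (1 - ((i:ℝ)/(N:ℝ))^k)) * hD1
/-- Upward (birth) rate of the Moran model: non-interactive neutral reproduction,
interactive neutral reproduction and deleterious mutation. -/
def birthX (N : ℕ) (r κ u ν₁ : ℝ) (i : ℕ) : ℝ :=
  r / 2 * ((N : ℝ) - i) * ((i : ℝ) / N)
    + κ / 2 * ((N : ℝ) - i) * ((i : ℝ) / N) * (((N : ℝ) - i) / N)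
    + ((N : ℝ) - i) * u * ν₁

/-- Downward (death) rate of the Moran model: non-interactive neutral reproduction,
interactive neutral reproduction, beneficial mutation and fittest-type-wins selection. -/
def deathX (N : ℕ) (r κ u ν₀ : ℝ) (s : ℕ → ℝ) (i : ℕ) : ℝ :=
  r / 2 * i * (((N : ℝ) - i) / N)
    + κ / 2 * i * (((N : ℝ) - i) / N) ^ 2
    + i * u * ν₀
    + ∑' m : ℕ, s m * i * (1 - ((i : ℝ) / N) ^ m)

/-- Rate matrix `Q_X` of the Moran model with interactive neutral reproduction,
fittest-type-wins selection and mutation, on states `{0, …, N}`. -/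
def QX (N : ℕ) (r κ u ν₀ ν₁ : ℝ) (s : ℕ → ℝ) :
    Matrix (Fin (N + 1)) (Fin (N + 1)) ℝ :=
  Matrix.of fun i j =>
    if (j : ℕ) = (i : ℕ) + 1 then birthX N r κ u ν₁ i
    else if (j : ℕ) + 1 = (i : ℕ) then deathX N r κ u ν₀ s i
    else if i = j then -birthX N r κ u ν₁ i - deathX N r κ u ν₀ s i
    else 0

/-- Off-diagonal rates of the dual chain `Z^{(N)}`; row `n ∈ {0,…,N}`,
column `c ∈ {0,…,N} ∪ {Δ}` (`none` encodes the cemetery state `Δ`). -/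
def qzOff (N : ℕ) (r κ u ν₀ ν₁ : ℝ) (s : ℕ → ℝ) (n : ℕ) :
    Option (Fin (N + 1)) → ℝ
  | none => u * ν₀ * n
  | some m =>
      if (m : ℕ) = n + 1 then
        κ / N * (n.choose 2 : ℝ) * (((N : ℝ) - n) / N)
          + n * ∑' k : ℕ, s k * pp N n k 1
      else if (m : ℕ) + 1 = n then
        1 / N * (n.choose 2 : ℝ) * (r + κ * (((N : ℝ) - n + 1) / N))
          + u * ν₁ * n
      else if n + 2 ≤ (m : ℕ) then
        n * ∑' k : ℕ, s k * pp N n k ((m : ℕ) - n)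
      else 0

/-- Rate matrix `Q_Z` of the dual chain on `{0,…,N} ∪ {Δ}`: the diagonal entry of
row `n` is minus the sum of all other entries of that row, and the row of `Δ` is zero. -/
def QZ (N : ℕ) (r κ u ν₀ ν₁ : ℝ) (s : ℕ → ℝ) :
    Matrix (Option (Fin (N + 1))) (Option (Fin (N + 1))) ℝ :=
  Matrix.of fun row col =>
    match row with
    | none => 0
    | some n =>
        if col = some n then
          -∑ c : Option (Fin (N + 1)), qzOff N r κ u ν₀ ν₁ s (n : ℕ) c
        else qzOff N r κ u ν₀ ν₁ s (n : ℕ) col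

/-- Duality matrix `H(i, n) = i^{\underline n} / N^{\underline n}`, `H(i, Δ) = 0`. -/
def Hmat (N : ℕ) : Matrix (Fin (N + 1)) (Option (Fin (N + 1))) ℝ :=
  Matrix.of fun i c =>
    match c with
    | none => 0
    | some n => (Nat.descFactorial (i : ℕ) (n : ℕ) : ℝ) / (Nat.descFactorial N (n : ℕ) : ℝ)



/-- **Generator intertwining identity** underlying the factorial moment duality
(key step for Theorem 2.2): `Q_X H = H Q_Zᵀ`. -/
theorem generator_intertwining
    (N : ℕ) (hN : 1 ≤ N) (r κ u ν₀ ν₁ : ℝ) (s : ℕ → ℝ)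
    (hr : 0 ≤ r) (hκ : 0 ≤ κ) (hu : 0 ≤ u)
    (hν₀ : 0 ≤ ν₀) (hν₁ : 0 ≤ ν₁) (hν : ν₀ + ν₁ = 1)
    (hs0 : s 0 = 0) (hs : ∀ m, 0 ≤ s m)
    (hssum : Summable fun m : ℕ => (m : ℝ) * s m) :
    QX N r κ u ν₀ ν₁ s * Hmat N
      = Hmat N * (QZ N r κ u ν₀ ν₁ s)ᵀ := by
  ext i c
  rw [Matrix.mul_apply, Matrix.mul_apply]
  rcases c with _ | n
  · -- cemetery column
    have h1 : ∀ j : Fin (N+1), QX N r κ u ν₀ ν₁ s i j * Hmat N j none = 0 := by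
      intro j
      have : Hmat N j none = 0 := rfl
      rw [this, mul_zero]
    have h2 : ∀ m : Option (Fin (N+1)),
        Hmat N i m * (QZ N r κ u ν₀ ν₁ s)ᵀ m none = 0 := by
      intro m
      have : (QZ N r κ u ν₀ ν₁ s)ᵀ m none = 0 := rfl
      rw [this, mul_zero]
    rw [Finset.sum_congr rfl (fun j _ => h1 j), Finset.sum_congr rfl (fun m _ => h2 m),
      Finset.sum_const_zero, Finset.sum_const_zero]
  · -- main column
    have hiN : (i:ℕ) ≤ N := by have := i.isLt; omega
    have hnN : (n:ℕ) ≤ N := by have := n.isLt; omega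
    have hb0 : (i:ℕ) = N → birthX N r κ u ν₁ (i:ℕ) = 0 := by
      intro h; rw [h]; simp [birthX]
    have hd0 : (i:ℕ) = 0 → deathX N r κ u ν₀ s (i:ℕ) = 0 := by
      intro h; rw [h]; simp [deathX]
    -- ===== left-hand side =====
    have hL : ∑ j : Fin (N+1), QX N r κ u ν₀ ν₁ s i j * Hmat N j (some n)
        = birthX N r κ u ν₁ (i:ℕ) * hhf N ((i:ℕ)+1) (n:ℕ)
          + deathX N r κ u ν₀ s (i:ℕ) * hhf N ((i:ℕ)-1) (n:ℕ)
          + (-(birthX N r κ u ν₁ (i:ℕ)) - deathX N r κ u ν₀ s (i:ℕ)) * hhf N (i:ℕ) (n:ℕ) := by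
      have hpoint : ∀ j : Fin (N+1), QX N r κ u ν₀ ν₁ s i j * Hmat N j (some n)
          = (if (j:ℕ) = (i:ℕ)+1 then birthX N r κ u ν₁ (i:ℕ) * hhf N ((i:ℕ)+1) (n:ℕ) else 0)
            + (if 1 ≤ (i:ℕ) then
                (if (j:ℕ) = (i:ℕ)-1 then deathX N r κ u ν₀ s (i:ℕ) * hhf N ((i:ℕ)-1) (n:ℕ) else 0)
              else 0)
            + (if (j:ℕ) = (i:ℕ) then
                (-(birthX N r κ u ν₁ (i:ℕ)) - deathX N r κ u ν₀ s (i:ℕ)) * hhf N (i:ℕ) (n:ℕ) else 0) := by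
        intro j
        have hH : Hmat N j (some n) = hhf N (j:ℕ) (n:ℕ) := rfl
        rw [hH]
        simp only [QX, Matrix.of_apply, Fin.ext_iff]
        split_ifs <;>
          (first
            | ring1
            | (exfalso; omega)
            | (rw [show (j:ℕ) = (i:ℕ)+1 from by omega]; ring1)
            | (rw [show (j:ℕ) = (i:ℕ)-1 from by omega]; ring1)
            | (rw [show (j:ℕ) = (i:ℕ) from by omega]; ring1))
      rw [Finset.sum_congr rfl (fun j _ => hpoint j), Finset.sum_add_distrib,
        Finset.sum_add_distrib]
      rw [sumFinSingle ((i:ℕ)+1) (fun _ => birthX N r κ u ν₁ (i:ℕ) * hhf N ((i:ℕ)+1) (n:ℕ))]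
      rw [sumFinSingle (i:ℕ) (fun _ =>
        (-(birthX N r κ u ν₁ (i:ℕ)) - deathX N r κ u ν₀ s (i:ℕ)) * hhf N (i:ℕ) (n:ℕ))]
      rw [if_pos hiN]
      have hmid : ∑ j : Fin (N+1), (if 1 ≤ (i:ℕ) then
          (if (j:ℕ) = (i:ℕ)-1 then deathX N r κ u ν₀ s (i:ℕ) * hhf N ((i:ℕ)-1) (n:ℕ) else 0)
          else 0) = deathX N r κ u ν₀ s (i:ℕ) * hhf N ((i:ℕ)-1) (n:ℕ) := by
        rcases Nat.eq_zero_or_pos (i:ℕ) with h | h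
        · rw [hd0 h, zero_mul]
          apply Finset.sum_eq_zero
          intro j _
          rw [if_neg (by omega)]
        · have : ∀ j : Fin (N+1), (if 1 ≤ (i:ℕ) then
              (if (j:ℕ) = (i:ℕ)-1 then deathX N r κ u ν₀ s (i:ℕ) * hhf N ((i:ℕ)-1) (n:ℕ) else 0)
              else 0)
              = (if (j:ℕ) = (i:ℕ)-1 then deathX N r κ u ν₀ s (i:ℕ) * hhf N ((i:ℕ)-1) (n:ℕ) else 0) := by
            intro j; rw [if_pos (show 1 ≤ (i:ℕ) by omega)]
          rw [Finset.sum_congr rfl (fun j _ => this j),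
            sumFinSingle ((i:ℕ)-1) (fun _ => deathX N r κ u ν₀ s (i:ℕ) * hhf N ((i:ℕ)-1) (n:ℕ)),
            if_pos (by omega)]
      rw [hmid]
      rcases le_or_gt ((i:ℕ)+1) N with h | h
      · rw [if_pos h]
      · rw [if_neg (by omega), hb0 (by omega)]; ring
    -- ===== right-hand side =====
    have hqzdiag : qzOff N r κ u ν₀ ν₁ s (n:ℕ) (some n) = 0 := by
      show (if ((n:Fin (N+1)):ℕ) = (n:ℕ) + 1 then _ else if ((n:Fin (N+1)):ℕ) + 1 = (n:ℕ) then _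
        else if (n:ℕ) + 2 ≤ ((n:Fin (N+1)):ℕ) then _ else 0) = 0
      rw [if_neg (by omega), if_neg (by omega), if_neg (by omega)]
    have hR : ∑ m : Option (Fin (N+1)),
        Hmat N i m * (QZ N r κ u ν₀ ν₁ s)ᵀ m (some n)
        = (κ / (N:ℝ) * (((n:ℕ)).choose 2 : ℝ) * (((N:ℝ) - ((n:ℕ):ℝ)) / (N:ℝ))
              + ((n:ℕ):ℝ) * ∑' k : ℕ, s k * pp N (n:ℕ) k 1)
            * (hhf N (i:ℕ) ((n:ℕ)+1) - hhf N (i:ℕ) (n:ℕ))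
          + (1 / (N:ℝ) * (((n:ℕ)).choose 2 : ℝ) * (r + κ * (((N:ℝ) - ((n:ℕ):ℝ) + 1) / (N:ℝ)))
              + u * ν₁ * ((n:ℕ):ℝ))
            * (hhf N (i:ℕ) ((n:ℕ)-1) - hhf N (i:ℕ) (n:ℕ))
          + (∑ m : Fin (N+1), (if (n:ℕ) + 2 ≤ (m:ℕ) then
              (((n:ℕ):ℝ) * ∑' k : ℕ, s k * pp N (n:ℕ) k ((m:ℕ) - (n:ℕ)))
                * (hhf N (i:ℕ) (m:ℕ) - hhf N (i:ℕ) (n:ℕ)) else 0))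
          - u * ν₀ * ((n:ℕ):ℝ) * hhf N (i:ℕ) (n:ℕ) := by
      rw [Fintype.sum_option]
      have hnone : Hmat N i none * (QZ N r κ u ν₀ ν₁ s)ᵀ none (some n) = 0 := by
        have h0 : Hmat N i none = 0 := rfl
        rw [h0, zero_mul]
      rw [hnone, zero_add]
      have hpoint2 : ∀ m : Fin (N+1), Hmat N i (some m) * (QZ N r κ u ν₀ ν₁ s)ᵀ (some m) (some n)
          = hhf N (i:ℕ) (m:ℕ) * qzOff N r κ u ν₀ ν₁ s (n:ℕ) (some m)
            + (if (m:ℕ) = (n:ℕ) then hhf N (i:ℕ) (n:ℕ) *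
                (-∑ c : Option (Fin (N+1)), qzOff N r κ u ν₀ ν₁ s (n:ℕ) c) else 0) := by
        intro m
        rw [Matrix.transpose_apply]
        have hH : Hmat N i (some m) = hhf N (i:ℕ) (m:ℕ) := rfl
        have hQZ : QZ N r κ u ν₀ ν₁ s (some n) (some m)
            = if some m = some n then
                -∑ c : Option (Fin (N+1)), qzOff N r κ u ν₀ ν₁ s (n:ℕ) c
              else qzOff N r κ u ν₀ ν₁ s (n:ℕ) (some m) := rfl
        rw [hH, hQZ]
        by_cases hmn : m = n
        · subst hmn
          rw [if_pos rfl, if_pos rfl, hqzdiag, mul_zero, zero_add]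
        · rw [if_neg (by simpa using hmn), if_neg (fun hc => hmn (Fin.ext hc)), add_zero]
      rw [Finset.sum_congr rfl (fun m _ => hpoint2 m), Finset.sum_add_distrib]
      rw [sumFinSingle (n:ℕ) (fun _ => hhf N (i:ℕ) (n:ℕ) *
        (-∑ c : Option (Fin (N+1)), qzOff N r κ u ν₀ ν₁ s (n:ℕ) c)), if_pos hnN]
      have hq : ∀ m : Fin (N+1), qzOff N r κ u ν₀ ν₁ s (n:ℕ) (some m)
          = if (m:ℕ) = (n:ℕ)+1 then
              (κ / (N:ℝ) * (((n:ℕ)).choose 2 : ℝ) * (((N:ℝ) - ((n:ℕ):ℝ)) / (N:ℝ))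
                + ((n:ℕ):ℝ) * ∑' k : ℕ, s k * pp N (n:ℕ) k 1)
            else if (m:ℕ)+1 = (n:ℕ) then
              (1 / (N:ℝ) * (((n:ℕ)).choose 2 : ℝ) * (r + κ * (((N:ℝ) - ((n:ℕ):ℝ) + 1) / (N:ℝ)))
                + u * ν₁ * ((n:ℕ):ℝ))
            else if (n:ℕ)+2 ≤ (m:ℕ) then
              ((n:ℕ):ℝ) * ∑' k : ℕ, s k * pp N (n:ℕ) k ((m:ℕ) - (n:ℕ))
            else 0 := fun m => rfl
      have hA0 : ¬ ((n:ℕ)+1 ≤ N) →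
          (κ / (N:ℝ) * (((n:ℕ)).choose 2 : ℝ) * (((N:ℝ) - ((n:ℕ):ℝ)) / (N:ℝ))
            + ((n:ℕ):ℝ) * ∑' k : ℕ, s k * pp N (n:ℕ) k 1) = 0 := by
        intro h
        have hn' : (n:ℕ) = N := by omega
        have hz : ∀ k : ℕ, s k * pp N (n:ℕ) k 1 = 0 := fun k => by
          rw [pp_eq_zero k (by omega), mul_zero]
        rw [hn']
        rw [show (∑' k : ℕ, s k * pp N N k 1) = 0 from by
          simp only [show ∀ k : ℕ, s k * pp N N k 1 = 0 from fun k => by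
            have := hz k; rwa [hn'] at this]; exact tsum_zero]
        simp
      -- decompose the weighted qzOff sum
      have hqz : ∀ m : Fin (N+1), hhf N (i:ℕ) (m:ℕ) * qzOff N r κ u ν₀ ν₁ s (n:ℕ) (some m)
          = (if (m:ℕ) = (n:ℕ)+1 then
              (κ / (N:ℝ) * (((n:ℕ)).choose 2 : ℝ) * (((N:ℝ) - ((n:ℕ):ℝ)) / (N:ℝ))
                + ((n:ℕ):ℝ) * ∑' k : ℕ, s k * pp N (n:ℕ) k 1) * hhf N (i:ℕ) ((n:ℕ)+1) else 0)
            + (if 1 ≤ (n:ℕ) then (if (m:ℕ) = (n:ℕ)-1 then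
                (1 / (N:ℝ) * (((n:ℕ)).choose 2 : ℝ) * (r + κ * (((N:ℝ) - ((n:ℕ):ℝ) + 1) / (N:ℝ)))
                  + u * ν₁ * ((n:ℕ):ℝ)) * hhf N (i:ℕ) ((n:ℕ)-1) else 0) else 0)
            + (if (n:ℕ)+2 ≤ (m:ℕ) then
                (((n:ℕ):ℝ) * ∑' k : ℕ, s k * pp N (n:ℕ) k ((m:ℕ) - (n:ℕ)))
                  * hhf N (i:ℕ) (m:ℕ) else 0) := by
        intro m
        rw [hq m]
        split_ifs <;>
          (first
            | ring1
            | (exfalso; omega)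
            | (rw [show (m:ℕ) = (n:ℕ)+1 from by omega]; ring1)
            | (rw [show (m:ℕ) = (n:ℕ)-1 from by omega]; ring1))
      have hqz1 : ∀ m : Fin (N+1), qzOff N r κ u ν₀ ν₁ s (n:ℕ) (some m)
          = (if (m:ℕ) = (n:ℕ)+1 then
              (κ / (N:ℝ) * (((n:ℕ)).choose 2 : ℝ) * (((N:ℝ) - ((n:ℕ):ℝ)) / (N:ℝ))
                + ((n:ℕ):ℝ) * ∑' k : ℕ, s k * pp N (n:ℕ) k 1) else 0)
            + (if 1 ≤ (n:ℕ) then (if (m:ℕ) = (n:ℕ)-1 then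
                (1 / (N:ℝ) * (((n:ℕ)).choose 2 : ℝ) * (r + κ * (((N:ℝ) - ((n:ℕ):ℝ) + 1) / (N:ℝ)))
                  + u * ν₁ * ((n:ℕ):ℝ)) else 0) else 0)
            + (if (n:ℕ)+2 ≤ (m:ℕ) then
                ((n:ℕ):ℝ) * ∑' k : ℕ, s k * pp N (n:ℕ) k ((m:ℕ) - (n:ℕ)) else 0) := by
        intro m
        rw [hq m]
        split_ifs <;> (first | ring1 | (exfalso; omega))
      have hSig2 : ∑ m : Fin (N+1), qzOff N r κ u ν₀ ν₁ s (n:ℕ) (some m)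
          = ((κ / (N:ℝ) * (((n:ℕ)).choose 2 : ℝ) * (((N:ℝ) - ((n:ℕ):ℝ)) / (N:ℝ))
                + ((n:ℕ):ℝ) * ∑' k : ℕ, s k * pp N (n:ℕ) k 1)
              + (if 1 ≤ (n:ℕ) then
                  (1 / (N:ℝ) * (((n:ℕ)).choose 2 : ℝ) * (r + κ * (((N:ℝ) - ((n:ℕ):ℝ) + 1) / (N:ℝ)))
                    + u * ν₁ * ((n:ℕ):ℝ)) else 0)
              + ∑ m : Fin (N+1), (if (n:ℕ)+2 ≤ (m:ℕ) then
                  ((n:ℕ):ℝ) * ∑' k : ℕ, s k * pp N (n:ℕ) k ((m:ℕ) - (n:ℕ)) else 0)) := by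
        rw [Finset.sum_congr rfl (fun m _ => hqz1 m), Finset.sum_add_distrib,
          Finset.sum_add_distrib]
        have e1 : ∑ m : Fin (N+1), (if (m:ℕ) = (n:ℕ)+1 then
            (κ / (N:ℝ) * (((n:ℕ)).choose 2 : ℝ) * (((N:ℝ) - ((n:ℕ):ℝ)) / (N:ℝ))
              + ((n:ℕ):ℝ) * ∑' k : ℕ, s k * pp N (n:ℕ) k 1) else 0)
            = (κ / (N:ℝ) * (((n:ℕ)).choose 2 : ℝ) * (((N:ℝ) - ((n:ℕ):ℝ)) / (N:ℝ))
              + ((n:ℕ):ℝ) * ∑' k : ℕ, s k * pp N (n:ℕ) k 1) := by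
          rw [sumFinSingle ((n:ℕ)+1) (fun _ =>
            κ / (N:ℝ) * (((n:ℕ)).choose 2 : ℝ) * (((N:ℝ) - ((n:ℕ):ℝ)) / (N:ℝ))
              + ((n:ℕ):ℝ) * ∑' k : ℕ, s k * pp N (n:ℕ) k 1)]
          split_ifs with h
          · rfl
          · rw [hA0 h]
        have e2 : ∑ m : Fin (N+1), (if 1 ≤ (n:ℕ) then (if (m:ℕ) = (n:ℕ)-1 then
            (1 / (N:ℝ) * (((n:ℕ)).choose 2 : ℝ) * (r + κ * (((N:ℝ) - ((n:ℕ):ℝ) + 1) / (N:ℝ)))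
              + u * ν₁ * ((n:ℕ):ℝ)) else 0) else 0)
            = (if 1 ≤ (n:ℕ) then
            (1 / (N:ℝ) * (((n:ℕ)).choose 2 : ℝ) * (r + κ * (((N:ℝ) - ((n:ℕ):ℝ) + 1) / (N:ℝ)))
              + u * ν₁ * ((n:ℕ):ℝ)) else 0) := by
          rcases Nat.eq_zero_or_pos (n:ℕ) with h | h
          · rw [if_neg (by omega)]
            apply Finset.sum_eq_zero
            intro m _
            rw [if_neg (by omega)]
          · rw [if_pos (by omega)]
            have heach : ∀ m : Fin (N+1), (if 1 ≤ (n:ℕ) then (if (m:ℕ) = (n:ℕ)-1 then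
                (1 / (N:ℝ) * (((n:ℕ)).choose 2 : ℝ) * (r + κ * (((N:ℝ) - ((n:ℕ):ℝ) + 1) / (N:ℝ)))
                  + u * ν₁ * ((n:ℕ):ℝ)) else 0) else 0)
                = (if (m:ℕ) = (n:ℕ)-1 then
                (1 / (N:ℝ) * (((n:ℕ)).choose 2 : ℝ) * (r + κ * (((N:ℝ) - ((n:ℕ):ℝ) + 1) / (N:ℝ)))
                  + u * ν₁ * ((n:ℕ):ℝ)) else 0) := by
              intro m; rw [if_pos (show 1 ≤ (n:ℕ) by omega)]
            rw [Finset.sum_congr rfl (fun m _ => heach m),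
              sumFinSingle ((n:ℕ)-1) (fun _ =>
                1 / (N:ℝ) * (((n:ℕ)).choose 2 : ℝ) * (r + κ * (((N:ℝ) - ((n:ℕ):ℝ) + 1) / (N:ℝ)))
                  + u * ν₁ * ((n:ℕ):ℝ)), if_pos (by omega)]
        rw [e1, e2]
      have hSig : ∑ c : Option (Fin (N+1)), qzOff N r κ u ν₀ ν₁ s (n:ℕ) c
          = u * ν₀ * ((n:ℕ):ℝ)
            + ((κ / (N:ℝ) * (((n:ℕ)).choose 2 : ℝ) * (((N:ℝ) - ((n:ℕ):ℝ)) / (N:ℝ))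
                + ((n:ℕ):ℝ) * ∑' k : ℕ, s k * pp N (n:ℕ) k 1)
              + (if 1 ≤ (n:ℕ) then
                  (1 / (N:ℝ) * (((n:ℕ)).choose 2 : ℝ) * (r + κ * (((N:ℝ) - ((n:ℕ):ℝ) + 1) / (N:ℝ)))
                    + u * ν₁ * ((n:ℕ):ℝ)) else 0)
              + ∑ m : Fin (N+1), (if (n:ℕ)+2 ≤ (m:ℕ) then
                  ((n:ℕ):ℝ) * ∑' k : ℕ, s k * pp N (n:ℕ) k ((m:ℕ) - (n:ℕ)) else 0)) := by
        rw [Fintype.sum_option, hSig2]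
        rfl
      rw [Finset.sum_congr rfl (fun m _ => hqz m), Finset.sum_add_distrib,
        Finset.sum_add_distrib, hSig]
      rw [sumFinSingle ((n:ℕ)+1) (fun _ =>
        (κ / (N:ℝ) * (((n:ℕ)).choose 2 : ℝ) * (((N:ℝ) - ((n:ℕ):ℝ)) / (N:ℝ))
          + ((n:ℕ):ℝ) * ∑' k : ℕ, s k * pp N (n:ℕ) k 1) * hhf N (i:ℕ) ((n:ℕ)+1))]
      have hAhh : (if (n:ℕ)+1 ≤ N then
            (κ / (N:ℝ) * (((n:ℕ)).choose 2 : ℝ) * (((N:ℝ) - ((n:ℕ):ℝ)) / (N:ℝ))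
              + ((n:ℕ):ℝ) * ∑' k : ℕ, s k * pp N (n:ℕ) k 1) * hhf N (i:ℕ) ((n:ℕ)+1) else 0)
          = (κ / (N:ℝ) * (((n:ℕ)).choose 2 : ℝ) * (((N:ℝ) - ((n:ℕ):ℝ)) / (N:ℝ))
              + ((n:ℕ):ℝ) * ∑' k : ℕ, s k * pp N (n:ℕ) k 1) * hhf N (i:ℕ) ((n:ℕ)+1) := by
        split_ifs with h
        · rfl
        · rw [hA0 h, zero_mul]
      rw [hAhh]
      have hmid2 : ∑ m : Fin (N+1), (if 1 ≤ (n:ℕ) then (if (m:ℕ) = (n:ℕ)-1 then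
            (1 / (N:ℝ) * (((n:ℕ)).choose 2 : ℝ) * (r + κ * (((N:ℝ) - ((n:ℕ):ℝ) + 1) / (N:ℝ)))
              + u * ν₁ * ((n:ℕ):ℝ)) * hhf N (i:ℕ) ((n:ℕ)-1) else 0) else 0)
          = (if 1 ≤ (n:ℕ) then
            (1 / (N:ℝ) * (((n:ℕ)).choose 2 : ℝ) * (r + κ * (((N:ℝ) - ((n:ℕ):ℝ) + 1) / (N:ℝ)))
              + u * ν₁ * ((n:ℕ):ℝ)) * hhf N (i:ℕ) ((n:ℕ)-1) else 0) := by
        rcases Nat.eq_zero_or_pos (n:ℕ) with h | h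
        · rw [if_neg (by omega)]
          apply Finset.sum_eq_zero
          intro m _
          rw [if_neg (by omega)]
        · rw [if_pos (by omega)]
          have heach : ∀ m : Fin (N+1), (if 1 ≤ (n:ℕ) then (if (m:ℕ) = (n:ℕ)-1 then
              (1 / (N:ℝ) * (((n:ℕ)).choose 2 : ℝ) * (r + κ * (((N:ℝ) - ((n:ℕ):ℝ) + 1) / (N:ℝ)))
                + u * ν₁ * ((n:ℕ):ℝ)) * hhf N (i:ℕ) ((n:ℕ)-1) else 0) else 0)
              = (if (m:ℕ) = (n:ℕ)-1 then
              (1 / (N:ℝ) * (((n:ℕ)).choose 2 : ℝ) * (r + κ * (((N:ℝ) - ((n:ℕ):ℝ) + 1) / (N:ℝ)))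
                + u * ν₁ * ((n:ℕ):ℝ)) * hhf N (i:ℕ) ((n:ℕ)-1) else 0) := by
            intro m; rw [if_pos (show 1 ≤ (n:ℕ) by omega)]
          rw [Finset.sum_congr rfl (fun m _ => heach m),
            sumFinSingle ((n:ℕ)-1) (fun _ =>
              (1 / (N:ℝ) * (((n:ℕ)).choose 2 : ℝ) * (r + κ * (((N:ℝ) - ((n:ℕ):ℝ) + 1) / (N:ℝ)))
                + u * ν₁ * ((n:ℕ):ℝ)) * hhf N (i:ℕ) ((n:ℕ)-1)), if_pos (by omega)]
      rw [hmid2]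
      have hBterm : (if 1 ≤ (n:ℕ) then
            (1 / (N:ℝ) * (((n:ℕ)).choose 2 : ℝ) * (r + κ * (((N:ℝ) - ((n:ℕ):ℝ) + 1) / (N:ℝ)))
              + u * ν₁ * ((n:ℕ):ℝ)) * hhf N (i:ℕ) ((n:ℕ)-1) else 0)
          - hhf N (i:ℕ) (n:ℕ) * (if 1 ≤ (n:ℕ) then
            (1 / (N:ℝ) * (((n:ℕ)).choose 2 : ℝ) * (r + κ * (((N:ℝ) - ((n:ℕ):ℝ) + 1) / (N:ℝ)))
              + u * ν₁ * ((n:ℕ):ℝ)) else 0)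
          = (1 / (N:ℝ) * (((n:ℕ)).choose 2 : ℝ) * (r + κ * (((N:ℝ) - ((n:ℕ):ℝ) + 1) / (N:ℝ)))
              + u * ν₁ * ((n:ℕ):ℝ)) * (hhf N (i:ℕ) ((n:ℕ)-1) - hhf N (i:ℕ) (n:ℕ)) := by
        split_ifs with h
        · ring1
        · rw [show (n:ℕ)-1 = (n:ℕ) from by omega]
          ring1
      have htail : ∑ m : Fin (N+1), (if (n:ℕ) + 2 ≤ (m:ℕ) then
            (((n:ℕ):ℝ) * ∑' k : ℕ, s k * pp N (n:ℕ) k ((m:ℕ) - (n:ℕ)))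
              * (hhf N (i:ℕ) (m:ℕ) - hhf N (i:ℕ) (n:ℕ)) else 0)
          = (∑ m : Fin (N+1), (if (n:ℕ)+2 ≤ (m:ℕ) then
              (((n:ℕ):ℝ) * ∑' k : ℕ, s k * pp N (n:ℕ) k ((m:ℕ) - (n:ℕ)))
                * hhf N (i:ℕ) (m:ℕ) else 0))
            - hhf N (i:ℕ) (n:ℕ) * ∑ m : Fin (N+1), (if (n:ℕ)+2 ≤ (m:ℕ) then
                ((n:ℕ):ℝ) * ∑' k : ℕ, s k * pp N (n:ℕ) k ((m:ℕ) - (n:ℕ)) else 0) := by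
        rw [Finset.mul_sum, ← Finset.sum_sub_distrib]
        refine Finset.sum_congr rfl fun m _ => ?_
        split_ifs with h
        · ring1
        · ring1
      linear_combination hBterm - htail
    rw [hL, hR]
    simp only [birthX, deathX]
    linear_combination lemM1 u ν₁ (i:ℕ) hnN + lemR r hnN hiN + lemK κ hnN hiN
      + lemM0 u ν₀ (i:ℕ) (n:ℕ) + lemS hN hnN hiN hs0 hs hssum

end
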